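/- Let σ be a countable first-order language, (𝔄_i) and (𝔅_i) sequences of σ-structures each of cardinality at most 2^ω, and 𝒰₁, 𝒰₂ non-principal ultrafilters on ℕ. Assuming the continuum hypothesis, the ultraproducts ∏ 𝔄_i / 𝒰₁ and ∏ 𝔅_i / 𝒰₂ are isomorphic if and only if they are elementarily equivalent. -/

import Mathlib

open FirstOrder Language Structure Filter Set Cardinal

universe u v w x

namespace KeislerCH

variable {L : FirstOrder.Language.{u, v}}

/-- Partial elementarity of a pair of assignments. -/
def Elem {M : Type*} {N : Type*} [L.Structure M] [L.Structure N] {γ : Type*}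
    (a : γ → M) (b : γ → N) : Prop :=
  ∀ (n : ℕ) (φ : L.Formula (Fin n)) (ι : Fin n → γ),
    φ.Realize (a ∘ ι) ↔ φ.Realize (b ∘ ι)

variable {M : Type*} {N : Type*} [L.Structure M] [L.Structure N] {γ : Type*}

theorem Elem.symm {a : γ → M} {b : γ → N} (h : Elem (L := L) a b) : Elem (L := L) b a :=
  fun n φ ι => (h n φ ι).symm

theorem Elem.comp {δ : Type*} {a : γ → M} {b : γ → N} (h : Elem (L := L) a b) (g : δ → γ) :
    Elem (L := L) (a ∘ g) (b ∘ g) := by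
  intro n φ ι
  have := h n φ (g ∘ ι)
  simpa [Function.comp_assoc] using this

theorem Elem.congr {a : γ → M} {b : γ → N} (h : Elem (L := L) a b)
    {a' : γ → M} {b' : γ → N} (ha : ∀ x, a' x = a x) (hb : ∀ x, b' x = b x) :
    Elem (L := L) a' b' := by
  have ha' : a' = a := funext ha
  have hb' : b' = b := funext hb
  rw [ha', hb']; exact h

/-- A partially elementary pair of assignments transfers all formulas over the full
variable set. -/
theorem Elem.realize_iff {a : γ → M} {b : γ → N} (h : Elem (L := L) a b)
    (φ : L.Formula γ) : φ.Realize a ↔ φ.Realize b := by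
  classical
  have hsub : ↑φ.freeVarFinset ⊆ ((φ.freeVarFinset : Set γ)) := subset_rfl
  set s : Set γ := (φ.freeVarFinset : Set γ) with hs
  have hA : Formula.Realize (M := M) (φ.restrictFreeVar (Set.inclusion hsub)) (a ∘ (↑)) ↔
      φ.Realize a := BoundedFormula.realize_restrictFreeVar' hsub
  have hB : Formula.Realize (M := N) (φ.restrictFreeVar (Set.inclusion hsub)) (b ∘ (↑)) ↔
      φ.Realize b := BoundedFormula.realize_restrictFreeVar' hsub
  rw [← hA, ← hB]
  set ψ := φ.restrictFreeVar (Set.inclusion hsub)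
  -- now ψ : L.Formula ↥s with s finite
  haveI : Fintype s := by
    rw [hs]; exact FinsetCoe.fintype _
  set k := Fintype.card s
  have e : (Fin k) ≃ s := (Fintype.equivFin s).symm
  have := h k (Formula.relabel (fun x => e.symm x) ψ) (fun j => (e j : γ))
  simp only [Formula.realize_relabel] at this
  convert this using 2 <;> · funext j; simp

/-- Elementarily equivalent structures agree on formulas with no free variables. -/
theorem realize_fin_zero_iff (h : M ≅[L] N) (φ : L.Formula (Fin 0))
    (vM : Fin 0 → M) (vN : Fin 0 → N) : φ.Realize vM ↔ φ.Realize vN := by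
  have hs := (elementarilyEquivalent_iff.1 h) (Formula.relabel (Fin.elim0) φ)
  simp only [Sentence.Realize, Formula.realize_relabel] at hs
  have e1 : vM = (default : Empty → M) ∘ Fin.elim0 := Subsingleton.elim _ _
  have e2 : vN = (default : Empty → N) ∘ Fin.elim0 := Subsingleton.elim _ _
  rw [e1, e2]
  exact hs

theorem formula_countable (hL : L.card ≤ Cardinal.aleph0) (α : Type x) [Countable α] :
    Countable (L.Formula α) := by
  rw [← Cardinal.mk_le_aleph0_iff]
  have h1 : #(L.Formula α) ≤ #((n : ℕ) × L.BoundedFormula α n) :=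
    Cardinal.mk_le_of_injective (f := Sigma.mk 0) sigma_mk_injective
  refine h1.trans (BoundedFormula.card_le.trans ?_)
  have hα : #α ≤ ℵ₀ := Cardinal.mk_le_aleph0
  simp only [sup_le_iff]
  refine ⟨le_rfl, ?_⟩
  calc Cardinal.lift.{max u v} #α + Cardinal.lift.{x} L.card
      ≤ Cardinal.lift.{max u v} ℵ₀ + Cardinal.lift.{x} ℵ₀ := by
        gcongr
        · exact Cardinal.lift_le.2 hα
        · exact Cardinal.lift_le.2 hL
    _ ≤ ℵ₀ := by simp

/-- Conjunction of the first formulas of a sequence. -/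
def conjUpTo (f : ℕ → L.Formula γ) : ℕ → L.Formula γ
  | 0 => f 0
  | (n+1) => conjUpTo f n ⊓ f (n+1)

theorem realize_conjUpTo {f : ℕ → L.Formula γ} {n : ℕ} {v : γ → M} :
    (conjUpTo f n).Realize v ↔ ∀ k ≤ n, (f k).Realize v := by
  induction n with
  | zero => simp [conjUpTo, Nat.le_zero]
  | succ n ih =>
    simp only [conjUpTo, Formula.realize_inf, ih]
    constructor
    · rintro ⟨h1, h2⟩ k hk
      rcases Nat.lt_succ_iff_lt_or_eq.1 (Nat.lt_succ_of_le hk) with h | rfl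
      · exact h1 k (Nat.lt_succ_iff.1 h)
      · exact h2
    · intro hh
      exact ⟨fun k hk => hh k (hk.trans (Nat.le_succ n)), hh (n+1) le_rfl⟩

section Saturation

variable {A : ℕ → Type w} [∀ i, L.Structure (A i)] [∀ i, Nonempty (A i)]

/-- Countable saturation of ultraproducts over ultrafilters extending the cofinite filter. -/
theorem saturation (u : Ultrafilter ℕ) (hu : (u : Filter ℕ) ≤ Filter.cofinite)
    {γ : Type w} (v : γ → (u : Filter ℕ).Product A) (φ : ℕ → L.Formula (γ ⊕ Unit))
    (h : ∀ n : ℕ, ∃ x, ∀ k ≤ n, (φ k).Realize (Sum.elim v fun _ => x)) :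
    ∃ x, ∀ k : ℕ, (φ k).Realize (Sum.elim v fun _ => x) := by
  classical
  letI : Setoid (∀ i, A i) := (u : Filter ℕ).productSetoid A
  set V : γ → ∀ i, A i := fun t => (v t).out with hVdef
  have hV : ∀ t, (Quotient.mk' (V t) : (u : Filter ℕ).Product A) = v t := fun t =>
    Quotient.out_eq _
  have key : ∀ (ψ : L.Formula (γ ⊕ Unit)) (g : ∀ i, A i),
      ψ.Realize (Sum.elim v fun _ => (Quotient.mk' g : (u : Filter ℕ).Product A)) ↔
        ∀ᶠ i in (u : Filter ℕ), ψ.Realize (Sum.elim (fun t => V t i) fun _ => g i) := by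
    intro ψ g
    have hcast := Ultraproduct.realize_formula_cast (u := u) ψ (Sum.elim V fun _ => g)
    have e : (fun j : γ ⊕ Unit => (Quotient.mk' (Sum.elim V (fun _ => g) j) :
        (u : Filter ℕ).Product A)) = Sum.elim v fun _ : Unit => (Quotient.mk' g) := by
      funext j; cases j with
      | inl t => exact hV t
      | inr _ => rfl
    rw [e] at hcast
    refine hcast.trans ?_
    apply Filter.eventually_congr
    filter_upwards with i
    have e2 : (fun j : γ ⊕ Unit => Sum.elim V (fun _ => g) j i) =
        Sum.elim (fun t => V t i) fun _ : Unit => g i := by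
      funext j; cases j <;> rfl
    rw [e2]
  set ψc : ℕ → L.Formula (γ ⊕ Unit) := conjUpTo φ with hψc
  set X : ℕ → Set ℕ := fun n =>
    {i | ∃ y : A i, (ψc n).Realize (Sum.elim (fun t => V t i) fun _ => y)} with hX
  have hXmem : ∀ n, X n ∈ (u : Filter ℕ) := by
    intro n
    obtain ⟨x, hx⟩ := h n
    have hcr : (ψc n).Realize (Sum.elim v fun _ => x) := realize_conjUpTo.2 hx
    rw [← Quotient.out_eq x] at hcr
    have := (key (ψc n) x.out).1 hcr
    exact Filter.mem_of_superset this fun i hi => ⟨x.out i, hi⟩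
  set Z : ℕ → Set ℕ := fun n => (⋂ k ∈ Finset.range (n+1), X k) ∩ {i | n ≤ i} with hZ
  have hZmem : ∀ n, Z n ∈ (u : Filter ℕ) := by
    intro n
    refine Filter.inter_mem ?_ (hu ?_)
    · exact (Filter.biInter_finset_mem _).2 fun k _ => hXmem k
    · rw [Filter.mem_cofinite]
      have : {i : ℕ | n ≤ i}ᶜ = {i | i < n} := by ext i; simp [not_le]
      rw [this]
      exact Set.finite_lt_nat n
  have hZX : ∀ n, Z n ⊆ X n := fun n i hi => by
    have := hi.1
    simp only [Set.mem_iInter] at this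
    exact this n (Finset.self_mem_range_succ n)
  set d : ℕ → ℕ := fun i => Nat.findGreatest (fun n => i ∈ Z n) i with hd
  have hdle : ∀ {k i}, i ∈ Z k → k ≤ d i := fun {k i} hik =>
    Nat.le_findGreatest hik.2 hik
  have hdZ : ∀ {k i}, i ∈ Z k → i ∈ Z (d i) := fun {k i} hik =>
    Nat.findGreatest_spec (P := fun n => i ∈ Z n) (m := k) hik.2 hik
  set g : ∀ i, A i := fun i =>
    if hp : ∃ y : A i, (ψc (d i)).Realize (Sum.elim (fun t => V t i) fun _ => y)
    then hp.choose else Classical.arbitrary _ with hg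
  refine ⟨(Quotient.mk' g : (u : Filter ℕ).Product A), fun k => ?_⟩
  rw [key (φ k) g]
  refine Filter.mem_of_superset (hZmem k) fun i hik => ?_
  have h1 : k ≤ d i := hdle hik
  have h2 : i ∈ X (d i) := hZX _ (hdZ hik)
  obtain ⟨y, hy⟩ := h2
  have hp : ∃ y : A i, (ψc (d i)).Realize (Sum.elim (fun t => V t i) fun _ => y) := ⟨y, hy⟩
  have hgi : (ψc (d i)).Realize (Sum.elim (fun t => V t i) fun _ => g i) := by
    rw [hg]; simp only [hp, dif_pos]; exact hp.choose_spec
  exact realize_conjUpTo.1 hgi k h1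

end Saturation

theorem realize_exUnit {γ : Type*} {W : Type*} [L.Structure W] (χ : L.Formula (γ ⊕ Unit))
    (v : γ → W) :
    Formula.Realize ((BoundedFormula.relabel
        (Sum.elim Sum.inl (fun _ => Sum.inr 0) : γ ⊕ Unit → γ ⊕ Fin 1) χ).ex) v ↔
      ∃ y : W, χ.Realize (Sum.elim v fun _ => y) := by
  rw [Formula.Realize, BoundedFormula.realize_ex]
  apply exists_congr; intro y
  rw [BoundedFormula.realize_relabel, Formula.Realize]
  apply iff_of_eq
  congr 1
  · funext j
    cases j with
    | inl t => rfl
    | inr _ => simp [Fin.snoc]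
  · exact Subsingleton.elim _ _

theorem forth {S : Type w} [L.Structure S] (hL : L.card ≤ Cardinal.aleph0)
    {B : ℕ → Type w} [∀ i, L.Structure (B i)] [∀ i, Nonempty (B i)]
    (u : Ultrafilter ℕ) (hu : (u : Filter ℕ) ≤ Filter.cofinite)
    {γ : Type w} [Countable γ] {a : γ → S} {b : γ → (u : Filter ℕ).Product B}
    (hab : Elem (L := L) a b) (m : S) :
    ∃ x, Elem (L := L) (Sum.elim a fun _ : Unit => m) (Sum.elim b fun _ : Unit => x) := by
  classical
  set am : γ ⊕ Unit → S := Sum.elim a fun _ : Unit => m with ham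
  set J := (n : ℕ) × (L.Formula (Fin n) × (Fin n → γ ⊕ Unit)) with hJ
  haveI : ∀ n : ℕ, Countable (L.Formula (Fin n)) := fun n => formula_countable hL (Fin n)
  haveI : Countable J := by infer_instance
  haveI : Nonempty J := ⟨⟨0, ⊤, Fin.elim0⟩⟩
  obtain ⟨e, he⟩ := exists_surjective_nat J
  set ψ : J → L.Formula (γ ⊕ Unit) := fun j =>
    if (j.2.1).Realize (am ∘ j.2.2) then Formula.relabel j.2.2 j.2.1
    else Formula.relabel j.2.2 j.2.1.not with hψ
  have hψM : ∀ j, (ψ j).Realize am := by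
    intro j
    by_cases hc : (j.2.1).Realize (am ∘ j.2.2)
    · simp only [hψ, if_pos hc, Formula.realize_relabel]; exact hc
    · simp only [hψ, if_neg hc, Formula.realize_relabel, Formula.realize_not]; exact hc
  have hfin : ∀ n, ∃ x, ∀ k ≤ n, (ψ (e k)).Realize (Sum.elim b fun _ => x) := by
    intro n
    set χ : L.Formula (γ ⊕ Unit) := conjUpTo (fun k => ψ (e k)) n with hχ
    have hχM : χ.Realize am := realize_conjUpTo.2 fun k _ => hψM _
    set θ : L.Formula γ := (BoundedFormula.relabel
        (Sum.elim Sum.inl (fun _ => Sum.inr 0) : γ ⊕ Unit → γ ⊕ Fin 1) χ).ex with hθ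
    have hθS : θ.Realize a := (realize_exUnit χ a).2 ⟨m, hχM⟩
    have hθN : θ.Realize b := (hab.realize_iff θ).1 hθS
    obtain ⟨x, hx⟩ := (realize_exUnit χ b).1 hθN
    exact ⟨x, realize_conjUpTo.1 hx⟩
  obtain ⟨x, hx⟩ := saturation u hu b (fun k => ψ (e k)) hfin
  have hall : ∀ j : J, (ψ j).Realize (Sum.elim b fun _ => x) := by
    intro j; obtain ⟨k, rfl⟩ := he j; exact hx k
  refine ⟨x, fun n φ₀ ι => ?_⟩
  have hj := hall ⟨n, φ₀, ι⟩
  by_cases hc : φ₀.Realize (am ∘ ι)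
  · simp only [hψ, if_pos hc, Formula.realize_relabel] at hj
    exact iff_of_true hc hj
  · simp only [hψ, if_neg hc, Formula.realize_relabel, Formula.realize_not] at hj
    exact iff_of_false hc hj

section Main

variable {M N : Type*} [L.Structure M] [L.Structure N] [Nonempty M] [Nonempty N]
variable {κ' : Type*} [LinearOrder κ']

/-- The `M`-side flattening of the construction data at stage `i`. -/
def flatA (F : κ' → (M × N) × (M × N)) (i : κ') (p : (M × N) × (M × N)) :
    ((Set.Iio i × Bool) ⊕ Bool) → M :=
  Sum.elim (fun jc => if jc.2 then (F jc.1.1).1.1 else (F jc.1.1).2.1)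
    (fun c => if c then p.1.1 else p.2.1)

/-- The `N`-side flattening of the construction data at stage `i`. -/
def flatB (F : κ' → (M × N) × (M × N)) (i : κ') (p : (M × N) × (M × N)) :
    ((Set.Iio i × Bool) ⊕ Bool) → N :=
  Sum.elim (fun jc => if jc.2 then (F jc.1.1).1.2 else (F jc.1.1).2.2)
    (fun c => if c then p.1.2 else p.2.2)

variable (L) in
/-- The property maintained at each stage of the construction. -/
def Good (eM : κ' → M) (eN : κ' → N) (F : κ' → (M × N) × (M × N)) (i : κ')
    (p : (M × N) × (M × N)) : Prop :=
  p.1.1 = eM i ∧ p.2.2 = eN i ∧ Elem (L := L) (flatA F i p) (flatB F i p)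

theorem flatA_congr {F F' : κ' → (M × N) × (M × N)} {i : κ'} (h : ∀ j < i, F j = F' j)
    (p : (M × N) × (M × N)) : flatA F i p = flatA F' i p := by
  funext z
  rcases z with ⟨⟨j, hj⟩, c⟩ | c
  · simp only [flatA, Sum.elim_inl, h j hj]
  · rfl

theorem flatB_congr {F F' : κ' → (M × N) × (M × N)} {i : κ'} (h : ∀ j < i, F j = F' j)
    (p : (M × N) × (M × N)) : flatB F i p = flatB F' i p := by
  funext z
  rcases z with ⟨⟨j, hj⟩, c⟩ | c
  · simp only [flatB, Sum.elim_inl, h j hj]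
  · rfl

theorem good_congr {eM : κ' → M} {eN : κ' → N} {F F' : κ' → (M × N) × (M × N)} {i : κ'}
    (h : ∀ j < i, F j = F' j) (p : (M × N) × (M × N)) :
    Good L eM eN F i p ↔ Good L eM eN F' i p := by
  unfold Good
  rw [flatA_congr h p, flatB_congr h p]

variable (L) in
/-- The construction of the back-and-forth sequence by transfinite recursion. -/
noncomputable def bf [WellFoundedLT κ'] (eM : κ' → M) (eN : κ' → N) :
    κ' → (M × N) × (M × N) :=
  IsWellFounded.fix (· < ·) (fun i rec => Classical.epsilon
    (Good L eM eN (fun j => if h : j < i then rec j h else Classical.arbitrary _) i))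

theorem bf_good [WellFoundedLT κ'] (eM : κ' → M) (eN : κ' → N) (i : κ')
    (hex : ∃ p, Good L eM eN (bf L eM eN) i p) :
    Good L eM eN (bf L eM eN) i (bf L eM eN i) := by
  have heq : bf L eM eN i = Classical.epsilon
      (Good L eM eN (fun j => if h : j < i then bf L eM eN j else Classical.arbitrary _) i) := by
    exact IsWellFounded.fix_eq _ _ i
  have hagree : ∀ j < i, bf L eM eN j =
      (fun j => if h : j < i then bf L eM eN j else Classical.arbitrary _) j := by
    intro j hj; simp [hj]
  have hex' : ∃ p, Good L eM eN
      (fun j => if h : j < i then bf L eM eN j else Classical.arbitrary _) i p := by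
    obtain ⟨p, hp⟩ := hex
    exact ⟨p, (good_congr hagree p).1 hp⟩
  have := Classical.epsilon_spec hex'
  rw [← heq] at this
  exact (good_congr hagree _).2 this

end Main

end KeislerCH

theorem ultraproducts_isomorphic_iff_elementarilyEquivalent_of_CH
    {L : FirstOrder.Language.{u, v}} (hL : L.card ≤ Cardinal.aleph0)
    (hCH : (2 : Cardinal.{w}) ^ Cardinal.aleph0 = Cardinal.aleph 1)
    (A B : ℕ → Type w) [∀ i, L.Structure (A i)] [∀ i, L.Structure (B i)]
    [∀ i, Nonempty (A i)] [∀ i, Nonempty (B i)]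
    (hA : ∀ i, #(A i) ≤ 2 ^ Cardinal.aleph0) (hB : ∀ i, #(B i) ≤ 2 ^ Cardinal.aleph0)
    (u₁ u₂ : Ultrafilter ℕ) (hu₁ : (u₁ : Filter ℕ) ≤ Filter.cofinite)
    (hu₂ : (u₂ : Filter ℕ) ≤ Filter.cofinite) :
    Nonempty ((u₁ : Filter ℕ).Product A ≃[L] (u₂ : Filter ℕ).Product B) ↔
      ((u₁ : Filter ℕ).Product A ≅[L] (u₂ : Filter ℕ).Product B) := by
  constructor
  · rintro ⟨f⟩
    exact f.toElementaryEmbedding.elementarilyEquivalent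
  intro hMN
  classical
  -- cardinality bound for ultraproducts
  have hcard : ∀ (C : ℕ → Type w), (∀ i, #(C i) ≤ 2 ^ Cardinal.aleph0) →
      ∀ (uu : Ultrafilter ℕ), #((uu : Filter ℕ).Product C) ≤ Cardinal.aleph 1 := by
    intro C hC uu
    have h1 : #((uu : Filter ℕ).Product C) ≤ #(∀ i, C i) := Cardinal.mk_quotient_le
    have h2 : #(∀ i, C i) ≤ (2 : Cardinal.{w}) ^ Cardinal.aleph0 := by
      rw [Cardinal.mk_pi]
      calc Cardinal.prod (fun i => #(C i))
          ≤ Cardinal.prod (fun _ : ℕ => (2 : Cardinal.{w}) ^ Cardinal.aleph0) :=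
            Cardinal.prod_le_prod _ _ hC
        _ = ((2 : Cardinal.{w}) ^ Cardinal.aleph0) ^ (Cardinal.aleph0 : Cardinal.{w}) := by
            rw [Cardinal.prod_const]
            simp
        _ = (2 : Cardinal.{w}) ^ (Cardinal.aleph0 * Cardinal.aleph0) := by
            rw [← Cardinal.power_mul]
        _ = (2 : Cardinal.{w}) ^ Cardinal.aleph0 := by rw [Cardinal.aleph0_mul_aleph0]
    exact (h1.trans h2).trans_eq hCH
  set κ := ((Cardinal.aleph 1 : Cardinal.{w}).ord).ToType with hκdef
  have hκcard : #κ = Cardinal.aleph 1 := by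
    rw [hκdef, Cardinal.mk_toType, Cardinal.card_ord]
  have exists_surj : ∀ (Y : Type w) [Nonempty Y], #Y ≤ Cardinal.aleph 1 →
      ∃ e : κ → Y, Function.Surjective e := by
    intro Y _ hY
    have hYκ : #Y ≤ #κ := by rw [hκcard]; exact hY
    obtain ⟨f⟩ := (Cardinal.le_def _ _).1 hYκ
    exact ⟨Function.invFun f, Function.invFun_surjective f.injective⟩
  obtain ⟨eM, heM⟩ := exists_surj _ (hcard A hA u₁)
  obtain ⟨eN, heN⟩ := exists_surj _ (hcard B hB u₂)
  have hIio : ∀ i : κ, Countable (Set.Iio i) := by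
    intro i
    rw [← Cardinal.mk_le_aleph0_iff]
    have h1 : #(Set.Iio i) < Cardinal.aleph 1 := Cardinal.mk_Iio_ord_toType i
    have h2 : (Cardinal.aleph 1 : Cardinal.{w}) = Order.succ Cardinal.aleph0 := by
      simp [← Cardinal.aleph_zero, ← Cardinal.aleph_succ]
    exact Order.lt_succ_iff.1 (lt_of_lt_of_eq h1 h2)
  set F := KeislerCH.bf L eM eN with hFdef
  set 𝔞 : κ × Bool → (u₁ : Filter ℕ).Product A :=
    fun x => if x.2 then (F x.1).1.1 else (F x.1).2.1 with h𝔞def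
  set 𝔟 : κ × Bool → (u₂ : Filter ℕ).Product B :=
    fun x => if x.2 then (F x.1).1.2 else (F x.1).2.2 with h𝔟def
  -- Good at stage i gives elementarity for tuples with indices ≤ i
  have key : ∀ i : κ, KeislerCH.Good L eM eN F i (F i) →
      ∀ (n : ℕ) (φ : L.Formula (Fin n)) (ι : Fin n → κ × Bool),
        (∀ k, (ι k).1 ≤ i) → (φ.Realize (𝔞 ∘ ι) ↔ φ.Realize (𝔟 ∘ ι)) := by
    intro i hGood n φ ι hle
    obtain ⟨-, -, hElem⟩ := hGood
    set ι' : Fin n → (Set.Iio i × Bool) ⊕ Bool := fun k =>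
      if h : (ι k).1 < i then Sum.inl (⟨(ι k).1, h⟩, (ι k).2) else Sum.inr (ι k).2 with hι'
    have hA' : KeislerCH.flatA F i (F i) ∘ ι' = 𝔞 ∘ ι := by
      funext k
      by_cases h : (ι k).1 < i
      · simp only [Function.comp_apply, hι', dif_pos h, KeislerCH.flatA, Sum.elim_inl, h𝔞def]
      · have hik : (ι k).1 = i := le_antisymm (hle k) (not_lt.1 h)
        simp only [Function.comp_apply, hι', dif_neg h, KeislerCH.flatA, Sum.elim_inr, h𝔞def]
        rw [hik]
    have hB' : KeislerCH.flatB F i (F i) ∘ ι' = 𝔟 ∘ ι := by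
      funext k
      by_cases h : (ι k).1 < i
      · simp only [Function.comp_apply, hι', dif_pos h, KeislerCH.flatB, Sum.elim_inl, h𝔟def]
      · have hik : (ι k).1 = i := le_antisymm (hle k) (not_lt.1 h)
        simp only [Function.comp_apply, hι', dif_neg h, KeislerCH.flatB, Sum.elim_inr, h𝔟def]
        rw [hik]
    have := hElem n φ ι'
    rw [hA', hB'] at this
    exact this
  -- every stage is Good
  have hGoodAll : ∀ i : κ, KeislerCH.Good L eM eN F i (F i) := by
    intro i
    induction i using WellFoundedLT.induction with
    | _ i IH =>
    refine KeislerCH.bf_good eM eN i ?_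
    -- previous part is elementary
    have hprev : KeislerCH.Elem (L := L)
        (fun jc : Set.Iio i × Bool => 𝔞 (jc.1.1, jc.2))
        (fun jc : Set.Iio i × Bool => 𝔟 (jc.1.1, jc.2)) := by
      intro n φ ι
      rcases Nat.eq_zero_or_pos n with rfl | hn
      · exact KeislerCH.realize_fin_zero_iff hMN φ _ _
      · haveI : Nonempty (Fin n) := ⟨⟨0, hn⟩⟩
        obtain ⟨k₀, hk₀⟩ := Finite.exists_max (fun k => ((ι k).1 : κ))
        have hjlt : ((ι k₀).1 : κ) < i := (ι k₀).1.2
        have := key ((ι k₀).1 : κ) (IH _ hjlt) n φ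
          (fun k => (((ι k).1 : κ), (ι k).2)) hk₀
        exact this
    haveI := hIio i
    haveI : Countable (Set.Iio i × Bool) := inferInstance
    obtain ⟨n₁, hn₁⟩ := KeislerCH.forth hL u₂ hu₂ hprev (eM i)
    obtain ⟨m₂, hm₂⟩ := KeislerCH.forth hL u₁ hu₁ hn₁.symm (eN i)
    refine ⟨((eM i, n₁), (m₂, eN i)), rfl, rfl, ?_⟩
    have h2 := hm₂.symm
    set g : ((Set.Iio i × Bool) ⊕ Bool) → (((Set.Iio i × Bool) ⊕ Unit) ⊕ Unit) := fun z =>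
      match z with
      | Sum.inl jc => Sum.inl (Sum.inl jc)
      | Sum.inr true => Sum.inl (Sum.inr ())
      | Sum.inr false => Sum.inr () with hg
    have h3 := h2.comp g
    refine h3.congr ?_ ?_
    · rintro (⟨⟨j, hj⟩, c⟩ | c)
      · rfl
      · cases c <;> rfl
    · rintro (⟨⟨j, hj⟩, c⟩ | c)
      · rfl
      · cases c <;> rfl
  -- global elementarity
  have hGElem : KeislerCH.Elem (L := L) 𝔞 𝔟 := by
    intro n φ ι
    rcases Nat.eq_zero_or_pos n with rfl | hn
    · exact KeislerCH.realize_fin_zero_iff hMN φ _ _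
    · haveI : Nonempty (Fin n) := ⟨⟨0, hn⟩⟩
      obtain ⟨k₀, hk₀⟩ := Finite.exists_max (fun k => (ι k).1)
      exact key ((ι k₀).1) (hGoodAll _) n φ ι hk₀
  -- surjectivity of the flattened maps
  have h𝔞surj : Function.Surjective 𝔞 := by
    intro m
    obtain ⟨i, rfl⟩ := heM m
    exact ⟨(i, true), by simp only [h𝔞def, if_pos]; exact (hGoodAll i).1⟩
  have h𝔟surj : Function.Surjective 𝔟 := by
    intro nn
    obtain ⟨i, rfl⟩ := heN nn
    refine ⟨(i, false), ?_⟩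
    simp only [h𝔟def]
    exact (hGoodAll i).2.1
  -- equality transfer
  have heq : ∀ x y : κ × Bool, 𝔞 x = 𝔞 y ↔ 𝔟 x = 𝔟 y := by
    intro x y
    have := hGElem 2 (Term.equal (Term.var 0) (Term.var 1)) ![x, y]
    simpa [Formula.realize_equal, Term.realize] using this
  choose pre hpre using h𝔞surj
  set h : (u₁ : Filter ℕ).Product A → (u₂ : Filter ℕ).Product B :=
    fun m => 𝔟 (pre m) with hhdef
  have hcompat : ∀ x, h (𝔞 x) = 𝔟 x := fun x => (heq (pre (𝔞 x)) x).1 (hpre (𝔞 x))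
  have hinj : Function.Injective h := by
    intro m m' hmm
    rw [← hpre m, ← hpre m']
    exact congrArg 𝔞 rfl ▸ (heq (pre m) (pre m')).2 hmm
  have hsurj : Function.Surjective h := by
    intro nn
    obtain ⟨x, rfl⟩ := h𝔟surj nn
    exact ⟨𝔞 x, hcompat x⟩
  have hfun : ∀ {n} (f : L.Functions n) (xs : Fin n → (u₁ : Filter ℕ).Product A),
      h (funMap f xs) = funMap f (h ∘ xs) := by
    intro n f xs
    set ix : Fin n → κ × Bool := fun k => pre (xs k) with hix
    set iy : κ × Bool := pre (funMap f xs) with hiy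
    have htr := hGElem (n+1) (Formula.graph f) (Fin.cons iy ix)
    have e1 : 𝔞 ∘ Fin.cons iy ix = Fin.cons (𝔞 iy) (𝔞 ∘ ix) := by
      funext k
      refine Fin.cases ?_ (fun k => ?_) k <;> simp
    have e2 : 𝔟 ∘ Fin.cons iy ix = Fin.cons (𝔟 iy) (𝔟 ∘ ix) := by
      funext k
      refine Fin.cases ?_ (fun k => ?_) k <;> simp
    rw [e1, e2, Formula.realize_graph, Formula.realize_graph] at htr
    have hM : funMap f (𝔞 ∘ ix) = 𝔞 iy := by
      have hxx : 𝔞 ∘ ix = xs := by funext k; exact hpre (xs k)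
      rw [hxx, hiy, hpre]
    have hN : funMap f (𝔟 ∘ ix) = 𝔟 iy := htr.1 hM
    have hxs : h ∘ xs = 𝔟 ∘ ix := by
      funext k
      rw [Function.comp_apply, ← hpre (xs k), hcompat]
      rfl
    rw [hxs, hN, hhdef]
  have hrel : ∀ {n} (r : L.Relations n) (xs : Fin n → (u₁ : Filter ℕ).Product A),
      RelMap r (h ∘ xs) ↔ RelMap r xs := by
    intro n r xs
    set ix : Fin n → κ × Bool := fun k => pre (xs k) with hix
    have htr := hGElem n (r.formula Term.var) ix
    simp only [Formula.realize_rel, Term.realize] at htr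
    have hxx : 𝔞 ∘ ix = xs := by funext k; exact hpre (xs k)
    have hxs : h ∘ xs = 𝔟 ∘ ix := by
      funext k
      rw [Function.comp_apply, ← hpre (xs k), hcompat]
      rfl
    rw [hxx] at htr
    rw [hxs]
    exact htr.symm
  exact ⟨⟨Equiv.ofBijective h ⟨hinj, hsurj⟩, @hfun, fun {n} r x => hrel r x⟩⟩
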